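/- arXiv:0802.2920 — 4 statements merged into one kernel-verified Lean document; each statement's English description precedes it below -/
import Mathlib

section
/- Let (A,B) be a normalized integral table algebra with no nontrivial basis elements of degree 1 or 2, and let b_3 ∈ B be an element of degree 3 with b_3·b̄_3 = 1 + b_8 for some b_8 ∈ B of degree 8. Then for any t_3 ∈ B of degree 3 one has (b_3 t_3, b_3 t_3) ≤ 2, and for any s_4 ∈ B of degree 4 one has (b_3 s_4, b_3 s_4) ≤ 2. Moreover, if (b_3 t_3, b_3 t_3) = 2 then t_3·t̄_3 = 1 + b_8. -/
/-- A normalized table algebra datum on a commutative `ℂ`-algebra `A`: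
a distinguished basis `B` containing `1`, an involutive algebra
endomorphism `bar` permuting `B`, a bilinear form for which `B` is
orthonormal and which satisfies `(a, bc) = (a·b̄, c)`, nonnegative real
structure constants, and a degree homomorphism positive on `B`. -/
structure TAData (A : Type) [CommRing A] [Algebra ℂ A] : Type where
  B : Finset A
  one_mem : (1 : A) ∈ B
  indep : LinearIndependent ℂ (fun b : {x : A // x ∈ B} => (b : A))
  span_top : Submodule.span ℂ (B : Set A) = ⊤
  bar : A →ₐ[ℂ] A
  bar_bar : ∀ a : A, bar (bar a) = a
  bar_mem : ∀ b ∈ B, bar b ∈ B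
  ip : A →ₗ[ℂ] A →ₗ[ℂ] ℂ
  ip_symm : ∀ a b : A, ip a b = ip b a
  ip_self : ∀ b ∈ B, ip b b = 1
  ip_ne : ∀ b ∈ B, ∀ c ∈ B, b ≠ c → ip b c = 0
  ip_assoc : ∀ a b c : A, ip a (b * c) = ip (a * bar b) c
  struct_nonneg : ∀ b ∈ B, ∀ c ∈ B, ∀ d ∈ B, ∃ r : ℝ, 0 ≤ r ∧ ip (b * c) d = (r : ℂ)
  deg : A →ₐ[ℂ] ℂ
  deg_pos : ∀ b ∈ B, ∃ r : ℝ, 0 < r ∧ deg b = (r : ℂ)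

namespace TAData

variable {A : Type} [CommRing A] [Algebra ℂ A]

/-- Integrality (making a table algebra a NITA): all structure constants are
nonnegative integers and all degrees are positive integers. -/
def Integral (T : TAData A) : Prop :=
  (∀ b ∈ T.B, ∀ c ∈ T.B, ∀ d ∈ T.B, ∃ n : ℕ, T.ip (b * c) d = (n : ℂ)) ∧
  (∀ b ∈ T.B, ∃ n : ℕ, 0 < n ∧ T.deg b = (n : ℂ))

/-- `L₁(B) = {1}` and `L₂(B) = ∅`: no nontrivial basis elements of degree 1 or 2. -/
def NoSmall (T : TAData A) : Prop :=
  (∀ b ∈ T.B, T.deg b = 1 → b = 1) ∧ (∀ b ∈ T.B, T.deg b ≠ 2)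

/-- The table algebra is generated (as an algebra) by `b` (and its conjugate). -/
def GeneratedBy (T : TAData A) (b : A) : Prop :=
  Algebra.adjoin ℂ ({b, T.bar b} : Set A) = ⊤

/-- A table subset of `B`: contains `1`, closed under the involution and under
supports of products. -/
def IsTableSubset (T : TAData A) (C : Set A) : Prop :=
  C ⊆ ↑T.B ∧ (1 : A) ∈ C ∧ (∀ b ∈ C, T.bar b ∈ C) ∧
    ∀ b ∈ C, ∀ c ∈ C, ∀ d ∈ T.B, T.ip (b * c) d ≠ 0 → d ∈ C

end TAData

section Aux

variable {A : Type} [CommRing A] [Algebra ℂ A]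

open Classical in
/-- choice of a natural number witness -/
noncomputable def natCoef (g : A → ℂ) : A → ℕ :=
  fun d => if h : ∃ k : ℕ, g d = (k : ℂ) then h.choose else 0

lemma natCoef_spec {g : A → ℂ} {d : A} (h : ∃ k : ℕ, g d = (k : ℂ)) :
    g d = (natCoef g d : ℂ) := by
  classical
  rw [natCoef, dif_pos h]
  exact h.choose_spec

lemma expand (T : TAData A) (x : A) :
    x = ∑ d ∈ T.B, T.ip x d • d := by
  have hx : x ∈ Submodule.span ℂ (T.B : Set A) := by rw [T.span_top]; trivial
  obtain ⟨f, -, hf⟩ := Submodule.mem_span_finset.mp hx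
  have hcoef : ∀ c ∈ T.B, T.ip x c = f c := by
    intro c hc
    rw [← hf]
    have : T.ip (∑ i ∈ T.B, f i • i) c = ∑ i ∈ T.B, f i * T.ip i c := by
      simp [map_sum, LinearMap.sum_apply, LinearMap.smul_apply, smul_eq_mul]
    rw [this, Finset.sum_eq_single c]
    · rw [T.ip_self c hc, mul_one]
    · intro b hb hbc; rw [T.ip_ne b hb c hc hbc, mul_zero]
    · intro h; exact absurd hc h
  have hsum : ∑ d ∈ T.B, T.ip x d • d = ∑ d ∈ T.B, f d • d :=
    Finset.sum_congr rfl (fun d hd => by rw [hcoef d hd])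
  exact (hsum.trans hf).symm

lemma deg_expand (T : TAData A) (x : A) :
    T.deg x = ∑ d ∈ T.B, T.ip x d * T.deg d := by
  conv_lhs => rw [expand T x]
  rw [map_sum]
  apply Finset.sum_congr rfl
  intro d hd
  rw [map_smul, smul_eq_mul]

lemma ip_assoc' (T : TAData A) (b c d : A) :
    T.ip (b * c) d = T.ip (T.bar b * d) c := by
  rw [T.ip_symm, T.ip_assoc, mul_comm d (T.bar b)]

lemma deg_bar (T : TAData A) (hInt : T.Integral) (b : A) (hb : b ∈ T.B) :
    T.deg (T.bar b) = T.deg b := by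
  set S : ℂ := ∑ c ∈ T.B, T.deg c * T.deg c with hS
  have hne : S ≠ 0 := by
    set dn := natCoef (fun d => T.deg d) with hdn
    have hrw : S = ((∑ c ∈ T.B, dn c * dn c : ℕ) : ℂ) := by
      rw [hS, Nat.cast_sum]
      apply Finset.sum_congr rfl
      intro c hc
      obtain ⟨n, hn, hcn⟩ := hInt.2 c hc
      have hsp : T.deg c = (dn c : ℂ) := natCoef_spec ⟨n, hcn⟩
      rw [hsp]; push_cast; ring
    rw [hrw, Nat.cast_ne_zero]
    intro hzero
    have h1 : dn 1 * dn 1 = 0 := by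
      have := Finset.sum_eq_zero_iff.mp hzero 1 T.one_mem
      exact this
    obtain ⟨n, hn, hcn⟩ := hInt.2 1 T.one_mem
    have hsp : T.deg (1 : A) = (dn 1 : ℂ) := natCoef_spec ⟨n, hcn⟩
    rw [map_one] at hsp
    have h11 : dn 1 = 1 := by exact_mod_cast hsp.symm
    rcases Nat.mul_eq_zero.mp h1 with h | h <;> omega
  have key : T.deg b * S = T.deg (T.bar b) * S := by
    have way1 : ∑ c ∈ T.B, T.deg c * T.deg (b * c) = T.deg b * S := by
      rw [hS, Finset.mul_sum]
      apply Finset.sum_congr rfl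
      intro c hc; rw [map_mul]; ring
    have way2 : ∑ c ∈ T.B, T.deg c * T.deg (b * c) = T.deg (T.bar b) * S := by
      have step : ∀ c, T.deg c * T.deg (b * c)
          = ∑ d ∈ T.B, T.deg c * (T.ip (T.bar b * d) c * T.deg d) := by
        intro c
        rw [deg_expand T (b * c), Finset.mul_sum]
        apply Finset.sum_congr rfl
        intro d hd
        rw [ip_assoc']
      calc ∑ c ∈ T.B, T.deg c * T.deg (b * c)
          = ∑ c ∈ T.B, ∑ d ∈ T.B, T.deg c * (T.ip (T.bar b * d) c * T.deg d) :=
            Finset.sum_congr rfl (fun c _ => step c)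
        _ = ∑ d ∈ T.B, ∑ c ∈ T.B, T.ip (T.bar b * d) c * T.deg c * T.deg d := by
            rw [Finset.sum_comm]
            exact Finset.sum_congr rfl (fun d _ => Finset.sum_congr rfl (fun c _ => by ring))
        _ = ∑ d ∈ T.B, T.deg (T.bar b * d) * T.deg d := by
            apply Finset.sum_congr rfl
            intro d hd
            rw [← Finset.sum_mul, ← deg_expand]
        _ = T.deg (T.bar b) * S := by
            rw [hS, Finset.mul_sum]
            exact Finset.sum_congr rfl (fun d _ => by rw [map_mul]; ring)
    rw [← way1, way2]
  exact (mul_right_cancel₀ hne key).symm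

end Aux

section Core

variable {A : Type} [CommRing A] [Algebra ℂ A]

lemma core (T : TAData A) (hInt : T.Integral)
    (b3 b8 : A) (hb3 : b3 ∈ T.B) (hd3 : T.deg b3 = 3)
    (hb8 : b8 ∈ T.B) (hd8 : T.deg b8 = 8)
    (hmul : b3 * T.bar b3 = 1 + b8)
    (t : A) (ht : t ∈ T.B) (k : ℕ) (hk : T.deg t = (k : ℂ)) (hk4 : k ≤ 4) :
    ∃ n : ℕ, T.ip (b3 * t) (b3 * t) = ((1 + n : ℕ) : ℂ) ∧ n ≤ 1 ∧
      (k = 3 → n = 1 → t * T.bar t = 1 + b8) := by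
  classical
  have hbt : T.bar t ∈ T.B := T.bar_mem t ht
  set cn := natCoef (fun d => T.ip (t * T.bar t) d) with hcndef
  set dn := natCoef (fun d => T.deg d) with hdndef
  have cnspec : ∀ d ∈ T.B, T.ip (t * T.bar t) d = (cn d : ℂ) := by
    intro d hd
    exact natCoef_spec (hInt.1 t ht (T.bar t) hbt d hd)
  have dnspec : ∀ d ∈ T.B, T.deg d = (dn d : ℂ) := by
    intro d hd
    obtain ⟨n, hn, h⟩ := hInt.2 d hd
    exact natCoef_spec ⟨n, h⟩
  have dnpos : ∀ d ∈ T.B, 0 < dn d := by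
    intro d hd
    obtain ⟨n, hn, h⟩ := hInt.2 d hd
    have h2 := dnspec d hd
    rw [h] at h2
    have : n = dn d := by exact_mod_cast h2
    omega
  have h18 : (1 : A) ≠ b8 := by
    intro h
    rw [← h, map_one] at hd8
    norm_num at hd8
  have hx1 : T.ip (t * T.bar t) 1 = 1 := by
    rw [T.ip_symm, T.ip_assoc, one_mul]
    exact T.ip_self _ hbt
  have hcn1 : cn 1 = 1 := by
    have h2 := cnspec 1 T.one_mem
    rw [hx1] at h2
    exact_mod_cast h2.symm
  have hdn1 : dn 1 = 1 := by
    have h2 := dnspec 1 T.one_mem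
    rw [map_one] at h2
    exact_mod_cast h2.symm
  have hdn8 : dn b8 = 8 := by
    have h2 := dnspec b8 hb8
    rw [hd8] at h2
    exact_mod_cast h2.symm
  have hN : T.ip (b3 * t) (b3 * t) = ((1 + cn b8 : ℕ) : ℂ) := by
    have e1 : T.ip (b3 * t) (b3 * t) = T.ip ((b3 * t) * T.bar b3) t := T.ip_assoc _ _ _
    have e2 : (b3 * t) * T.bar b3 = t + b8 * t := by
      have : (b3 * t) * T.bar b3 = (b3 * T.bar b3) * t := by ring
      rw [this, hmul]; ring
    have e4 : T.ip (b8 * t) t = T.ip (t * T.bar t) b8 := by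
      rw [T.ip_symm, mul_comm b8 t, T.ip_assoc]
    rw [e1, e2, map_add, LinearMap.add_apply, T.ip_self t ht, e4, cnspec b8 hb8]
    push_cast; ring
  have hdegsum : ∑ d ∈ T.B, cn d * dn d = k * k := by
    have h1 : T.deg (t * T.bar t) = ∑ d ∈ T.B, T.ip (t * T.bar t) d * T.deg d :=
      deg_expand T _
    have h2 : T.deg (t * T.bar t) = ((k * k : ℕ) : ℂ) := by
      rw [map_mul, deg_bar T hInt t ht, hk]; push_cast; ring
    have h3 : ∑ d ∈ T.B, T.ip (t * T.bar t) d * T.deg d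
        = ((∑ d ∈ T.B, cn d * dn d : ℕ) : ℂ) := by
      rw [Nat.cast_sum]
      apply Finset.sum_congr rfl
      intro d hd
      rw [cnspec d hd, dnspec d hd]; push_cast; ring
    exact_mod_cast (h2.symm.trans (h1.trans h3)).symm
  have hpair : ({1, b8} : Finset A) ⊆ T.B := by
    intro y hy
    rcases Finset.mem_insert.mp hy with h | h
    · rw [h]; exact T.one_mem
    · rw [Finset.mem_singleton.mp h]; exact hb8
  have hpairsum : ∑ d ∈ ({1, b8} : Finset A), cn d * dn d = 1 + cn b8 * 8 := by
    rw [Finset.sum_pair h18, hcn1, hdn1, hdn8]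
  have hle : 1 + cn b8 * 8 ≤ k * k := by
    rw [← hpairsum, ← hdegsum]
    exact Finset.sum_le_sum_of_subset hpair
  have hkk : k * k ≤ 16 := Nat.mul_le_mul hk4 hk4
  refine ⟨cn b8, hN, by omega, ?_⟩
  intro hk3 hcnb8
  subst hk3
  have hsplit := Finset.sum_sdiff (f := fun d => cn d * dn d) hpair
  have hzero : ∑ d ∈ T.B \ ({1, b8} : Finset A), cn d * dn d = 0 := by
    rw [hpairsum] at hsplit
    rw [hdegsum] at hsplit
    omega
  have hvanish : ∀ d ∈ T.B, d ∉ ({1, b8} : Finset A) → T.ip (t * T.bar t) d = 0 := by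
    intro d hd hnd
    have hmem : d ∈ T.B \ ({1, b8} : Finset A) := Finset.mem_sdiff.mpr ⟨hd, hnd⟩
    have h0 := (Finset.sum_eq_zero_iff.mp hzero) d hmem
    have hp := dnpos d hd
    have hc0 : cn d = 0 := by
      rcases Nat.mul_eq_zero.mp h0 with h | h
      · exact h
      · omega
    rw [cnspec d hd, hc0]; norm_num
  have hexp : t * T.bar t = ∑ d ∈ ({1, b8} : Finset A), T.ip (t * T.bar t) d • d := by
    conv_lhs => rw [expand T (t * T.bar t)]
    exact (Finset.sum_subset hpair
      (fun d hd hnd => by rw [hvanish d hd hnd, zero_smul])).symm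
  rw [hexp, Finset.sum_pair h18, hx1, cnspec b8 hb8, hcnb8]
  norm_num

end Core

/-- Lemma 2.2: bounds on `(b₃t₃, b₃t₃)` and `(b₃s₄, b₃s₄)`
in a NITA with `b₃·b̄₃ = 1 + b₈`. -/
theorem stmt_1 {A : Type} [CommRing A] [Algebra ℂ A] (T : TAData A)
    (hInt : T.Integral) (hSmall : T.NoSmall)
    (b3 b8 : A) (hb3 : b3 ∈ T.B) (hd3 : T.deg b3 = 3)
    (hb8 : b8 ∈ T.B) (hd8 : T.deg b8 = 8)
    (hmul : b3 * T.bar b3 = 1 + b8) :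
    (∀ t3 ∈ T.B, T.deg t3 = 3 →
      ∃ k : ℕ, T.ip (b3 * t3) (b3 * t3) = (k : ℂ) ∧ k ≤ 2) ∧
    (∀ s4 ∈ T.B, T.deg s4 = 4 →
      ∃ k : ℕ, T.ip (b3 * s4) (b3 * s4) = (k : ℂ) ∧ k ≤ 2) ∧
    (∀ t3 ∈ T.B, T.deg t3 = 3 → T.ip (b3 * t3) (b3 * t3) = 2 →
      t3 * T.bar t3 = 1 + b8) := by
  refine ⟨?_, ?_, ?_⟩
  · intro t3 ht3 hd
    have hk : T.deg t3 = ((3 : ℕ) : ℂ) := by rw [hd]; norm_num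
    obtain ⟨n, hN, hn1, -⟩ :=
      core T hInt b3 b8 hb3 hd3 hb8 hd8 hmul t3 ht3 3 hk (by norm_num)
    exact ⟨1 + n, hN, by omega⟩
  · intro s4 hs4 hd
    have hk : T.deg s4 = ((4 : ℕ) : ℂ) := by rw [hd]; norm_num
    obtain ⟨n, hN, hn1, -⟩ :=
      core T hInt b3 b8 hb3 hd3 hb8 hd8 hmul s4 hs4 4 hk (le_refl 4)
    exact ⟨1 + n, hN, by omega⟩
  · intro t3 ht3 hd hip2
    have hk : T.deg t3 = ((3 : ℕ) : ℂ) := by rw [hd]; norm_num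
    obtain ⟨n, hN, hn1, heq⟩ :=
      core T hInt b3 b8 hb3 hd3 hb8 hd8 hmul t3 ht3 3 hk (by norm_num)
    have h2 : ((1 + n : ℕ) : ℂ) = 2 := by rw [← hN]; exact hip2
    have hn : 1 + n = 2 := by exact_mod_cast h2
    exact heq rfl (by omega)
end

section
/- Let (A,B) be a NITA generated by a non-real element b_3 ∈ B of degree 3 with b_3·b̄_3 = 1 + b_8, with no nontrivial basis elements of degree 1 or 2, and assume b_3² = b_4 + b_5 with b_4, b_5 ∈ B of degrees 4 and 5. Then b̄_3·b_4 = b_3 + b_9 for some b_9 ∈ B of degree 9, and b_4·b̄_4 = 1 + b_8 + c_7 for some element c_7 which is a nonnegative integer combination of basis elements of total degree 7. -/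
section Helpers

variable {A : Type} [CommRing A] [Algebra ℂ A] (T : TAData A)

theorem TA_expand (x : A) : x = ∑ d ∈ T.B, T.ip x d • d := by
  have hx : x ∈ Submodule.span ℂ (T.B : Set A) := by rw [T.span_top]; trivial
  induction hx using Submodule.span_induction with
  | mem b hb =>
    symm
    rw [Finset.sum_eq_single_of_mem b hb]
    · rw [T.ip_self b hb, one_smul]
    · intro d hd hne
      rw [T.ip_ne b hb d hd (fun h => hne (h.symm ▸ rfl))]
      · simp
  | zero => simp
  | add x y _ _ hx hy =>
    conv_lhs => rw [hx, hy]
    rw [← Finset.sum_add_distrib]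
    refine Finset.sum_congr rfl fun d hd => ?_
    rw [map_add, LinearMap.add_apply, add_smul]
  | smul c x _ hx =>
    conv_lhs => rw [hx]
    rw [Finset.smul_sum]
    refine Finset.sum_congr rfl fun d hd => ?_
    rw [map_smul, LinearMap.smul_apply, smul_eq_mul, smul_smul]

theorem TA_ext_ip {x y : A} (h : ∀ d ∈ T.B, T.ip x d = T.ip y d) : x = y := by
  rw [TA_expand T x, TA_expand T y]
  exact Finset.sum_congr rfl fun d hd => by rw [h d hd]

theorem TA_deg_expand (x : A) : T.deg x = ∑ d ∈ T.B, T.ip x d * T.deg d := by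
  conv_lhs => rw [TA_expand T x]
  rw [map_sum]
  exact Finset.sum_congr rfl fun d hd => by rw [map_smul, smul_eq_mul]


theorem TA_ip_E (z : A) : T.ip z (∑ d ∈ T.B, T.deg d • d) = T.deg z := by
  rw [map_sum (T.ip z), TA_deg_expand T z]
  exact Finset.sum_congr rfl fun d hd => by rw [map_smul, smul_eq_mul, mul_comm]

theorem TA_deg_bar (b : A) (hb : b ∈ T.B) : T.deg (T.bar b) = T.deg b := by
  set E : A := ∑ d ∈ T.B, T.deg d • d with hE
  have key : b * E = T.deg (T.bar b) • E := by
    apply TA_ext_ip T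
    intro c hc
    have l1 : T.ip (b * E) c = T.deg c * T.deg (T.bar b) := by
      rw [T.ip_symm, T.ip_assoc c b E, TA_ip_E T, map_mul]
    have l2 : T.ip (T.deg (T.bar b) • E) c = T.deg c * T.deg (T.bar b) := by
      rw [map_smul, LinearMap.smul_apply, smul_eq_mul, T.ip_symm, TA_ip_E T]
      ring
    rw [l1, l2]
  have happ := congrArg T.deg key
  rw [map_mul, map_smul, smul_eq_mul] at happ
  have hdegE : T.deg E = ∑ d ∈ T.B, T.deg d * T.deg d := by
    rw [hE, map_sum]
    exact Finset.sum_congr rfl fun d hd => by rw [map_smul, smul_eq_mul]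
  have hre : 0 < (T.deg E).re := by
    rw [hdegE, Complex.re_sum]
    apply Finset.sum_pos
    · intro d hd
      obtain ⟨r, hr, hdr⟩ := T.deg_pos d hd
      rw [hdr, ← Complex.ofReal_mul, Complex.ofReal_re]
      positivity
    · exact ⟨1, T.one_mem⟩
  have hne : T.deg E ≠ 0 := fun h0 => by rw [h0] at hre; simp at hre
  exact (mul_right_cancel₀ hne happ).symm

theorem TA_deg_real (x : A) (h : ∀ d ∈ T.B, ∃ n : ℕ, T.ip x d = (n : ℂ)) :
    ∃ t : ℝ, 0 ≤ t ∧ T.deg x = (t : ℂ) := by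
  refine ⟨(T.deg x).re, ?_, ?_⟩
  · rw [TA_deg_expand T x, Complex.re_sum]
    apply Finset.sum_nonneg
    intro d hd
    obtain ⟨n, hn⟩ := h d hd
    obtain ⟨r, hr, hdr⟩ := T.deg_pos d hd
    rw [hn, hdr]
    simp only [Complex.mul_re, Complex.ofReal_re, Complex.natCast_re,
      Complex.ofReal_im, Complex.natCast_im, mul_zero, zero_mul, sub_zero]
    positivity
  · have him : (T.deg x).im = 0 := by
      rw [TA_deg_expand T x, Complex.im_sum]
      apply Finset.sum_eq_zero
      intro d hd
      obtain ⟨n, hn⟩ := h d hd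
      obtain ⟨r, hr, hdr⟩ := T.deg_pos d hd
      rw [hn, hdr]
      simp [Complex.mul_im]
    rw [← Complex.re_add_im (T.deg x), him]
    simp

theorem TA_norm_one_mem (x : A) (h : ∀ d ∈ T.B, ∃ n : ℕ, T.ip x d = (n : ℂ))
    (hx : T.ip x x = 1) : ∃ b ∈ T.B, x = b := by
  classical
  have h' : ∀ d : A, ∃ n : ℕ, d ∈ T.B → T.ip x d = (n : ℂ) := by
    intro d
    by_cases hd : d ∈ T.B
    · obtain ⟨n, hn⟩ := h d hd; exact ⟨n, fun _ => hn⟩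
    · exact ⟨0, fun hc => absurd hc hd⟩
  choose n hn using h'
  have hxx : T.ip x x = ((∑ d ∈ T.B, (n d) ^ 2 : ℕ) : ℂ) := by
    nth_rewrite 2 [TA_expand T x]
    rw [map_sum (T.ip x)]
    push_cast
    refine Finset.sum_congr rfl fun d hd => ?_
    rw [map_smul, smul_eq_mul, hn d hd]
    ring
  have hnat : ∑ d ∈ T.B, (n d) ^ 2 = 1 := by
    have : ((∑ d ∈ T.B, (n d) ^ 2 : ℕ) : ℂ) = ((1 : ℕ) : ℂ) := by
      rw [← hxx, hx]; norm_num
    exact_mod_cast this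
  have hsumne : ∑ d ∈ T.B, (n d) ^ 2 ≠ 0 := by rw [hnat]; norm_num
  obtain ⟨d₀, hd₀B, hd₀'⟩ := Finset.exists_ne_zero_of_sum_ne_zero hsumne
  have hd₀ : (n d₀) ^ 2 ≠ 0 := by simpa using hd₀'
  have h2 : (n d₀) ^ 2 + ∑ d ∈ T.B.erase d₀, (n d) ^ 2 = 1 := by
    have := Finset.add_sum_erase T.B (fun d => (n d) ^ 2) hd₀B
    simpa [hnat] using this
  have hrest : ∑ d ∈ T.B.erase d₀, (n d) ^ 2 = 0 := by omega
  have hd₀1 : n d₀ = 1 := by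
    have : (n d₀) ^ 2 = 1 := by omega
    nlinarith [this]
  refine ⟨d₀, hd₀B, ?_⟩
  rw [TA_expand T x, Finset.sum_eq_single_of_mem d₀ hd₀B]
  · rw [hn d₀ hd₀B, hd₀1]
    norm_num
  · intro d hd hne
    have hdz : (n d) ^ 2 = 0 := by
      have hmem : d ∈ T.B.erase d₀ := Finset.mem_erase.mpr ⟨hne, hd⟩
      exact (Finset.sum_eq_zero_iff.mp hrest) d hmem
    have : n d = 0 := by nlinarith [hdz]
    rw [hn d hd, this]
    norm_num

end Helpers


/-- if `b₃² = b₄ + b₅` then `b̄₃·b₄ = b₃ + b₉` with `b₉ ∈ B`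
of degree 9 and `b₄·b̄₄ = 1 + b₈ + c₇` with `c₇` a nonnegative-integer
combination of basis elements of total degree 7. -/
theorem stmt_2 {A : Type} [CommRing A] [Algebra ℂ A] (T : TAData A)
    (hInt : T.Integral) (hSmall : T.NoSmall)
    (b3 b8 b4 b5 : A)
    (hb3 : b3 ∈ T.B) (hd3 : T.deg b3 = 3) (hnr : T.bar b3 ≠ b3)
    (hgen : T.GeneratedBy b3)
    (hb8 : b8 ∈ T.B) (hd8 : T.deg b8 = 8)
    (hmul : b3 * T.bar b3 = 1 + b8)
    (hb4 : b4 ∈ T.B) (hd4 : T.deg b4 = 4)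
    (hb5 : b5 ∈ T.B) (hd5 : T.deg b5 = 5)
    (hsq : b3 * b3 = b4 + b5) :
    (∃ b9 ∈ T.B, T.deg b9 = 9 ∧ T.bar b3 * b4 = b3 + b9) ∧
    (∃ c7 : A, T.deg c7 = 7 ∧ (∀ d ∈ T.B, ∃ k : ℕ, T.ip c7 d = (k : ℂ)) ∧
      b4 * T.bar b4 = 1 + b8 + c7) := by
  classical
  obtain ⟨hIntS, hIntD⟩ := hInt
  have hb3' : T.bar b3 ∈ T.B := T.bar_mem b3 hb3
  have hb4' : T.bar b4 ∈ T.B := T.bar_mem b4 hb4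
  have degbar3 : T.deg (T.bar b3) = 3 := by rw [TA_deg_bar T b3 hb3, hd3]
  have degbar4 : T.deg (T.bar b4) = 4 := by rw [TA_deg_bar T b4 hb4, hd4]
  have hb54 : b5 ≠ b4 := by
    intro h; rw [h, hd4] at hd5; norm_num at hd5
  have ipA : T.ip (T.bar b3 * b4) b3 = 1 := by
    rw [T.ip_symm, T.ip_assoc b3 (T.bar b3) b4, T.bar_bar, hsq, map_add,
      LinearMap.add_apply, T.ip_self b4 hb4, T.ip_ne b5 hb5 b4 hb4 hb54]
    norm_num
  obtain ⟨k, hk8⟩ := hIntS b4 hb4 (T.bar b4) hb4' b8 hb8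
  have hprod : (T.bar b3 * b4) * b3 = b4 + b4 * b8 := by
    have h1 : (T.bar b3 * b4) * b3 = b4 * (b3 * T.bar b3) := by ring
    rw [h1, hmul]; ring
  have hxx : T.ip (T.bar b3 * b4) (T.bar b3 * b4) = 1 + (k : ℂ) := by
    rw [T.ip_assoc _ (T.bar b3) b4, T.bar_bar, hprod, map_add, LinearMap.add_apply,
      T.ip_self b4 hb4, T.ip_symm (b4 * b8) b4, T.ip_assoc b4 b4 b8, hk8]
  have hxcoeff : ∀ d ∈ T.B, ∃ n : ℕ, T.ip (T.bar b3 * b4) d = (n : ℂ) :=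
    fun d hd => hIntS (T.bar b3) hb3' b4 hb4 d hd
  have hb8ne1 : b8 ≠ 1 := by
    intro h; rw [h, map_one] at hd8; norm_num at hd8
  have ip441 : T.ip (b4 * T.bar b4) 1 = 1 := by
    rw [T.ip_symm, T.ip_assoc 1 b4 (T.bar b4), one_mul, T.ip_self (T.bar b4) hb4']
  have hccoeff : ∀ d ∈ T.B, ∃ n : ℕ,
      T.ip (b4 * T.bar b4 - 1 - (k : ℂ) • b8) d = (n : ℂ) := by
    intro d hd
    rw [map_sub, map_sub, map_smul, LinearMap.sub_apply, LinearMap.sub_apply,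
      LinearMap.smul_apply, smul_eq_mul]
    by_cases hd1 : d = 1
    · subst hd1
      refine ⟨0, ?_⟩
      rw [ip441, T.ip_self 1 T.one_mem, T.ip_ne b8 hb8 1 T.one_mem hb8ne1]
      norm_num
    by_cases hd8' : d = b8
    · refine ⟨0, ?_⟩
      rw [hd8', hk8, T.ip_self b8 hb8, T.ip_ne 1 T.one_mem b8 hb8 (fun h => hb8ne1 h.symm)]
      norm_num
    · obtain ⟨n, hn⟩ := hIntS b4 hb4 (T.bar b4) hb4' d hd
      refine ⟨n, ?_⟩
      rw [hn, T.ip_ne 1 T.one_mem d hd (fun h => hd1 h.symm),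
        T.ip_ne b8 hb8 d hd (fun h => hd8' h.symm)]
      ring
  have hdegc : T.deg (b4 * T.bar b4 - 1 - (k : ℂ) • b8) = 15 - 8 * (k : ℂ) := by
    rw [map_sub, map_sub, map_smul, map_mul, map_one, hd4, degbar4, hd8, smul_eq_mul]
    ring
  have hkle : k ≤ 1 := by
    obtain ⟨t, ht0, htE⟩ := TA_deg_real T _ hccoeff
    rw [hdegc] at htE
    have hre : (15 : ℝ) - 8 * (k : ℝ) = t := by exact_mod_cast htE
    by_contra hk
    push_neg at hk
    have h2k : (2 : ℝ) ≤ (k : ℝ) := by exact_mod_cast hk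
    linarith
  have hk0 : k ≠ 0 := by
    intro h0
    subst h0
    have hxx1 : T.ip (T.bar b3 * b4) (T.bar b3 * b4) = 1 := by rw [hxx]; norm_num
    obtain ⟨b, hbB, hxb⟩ := TA_norm_one_mem T _ hxcoeff hxx1
    have hb3b : b = b3 := by
      by_contra hne
      have hz := T.ip_ne b hbB b3 hb3 hne
      rw [hxb, hz] at ipA
      norm_num at ipA
    have hdx : T.deg (T.bar b3 * b4) = 12 := by
      rw [map_mul, degbar3, hd4]; norm_num
    rw [hxb, hb3b, hd3] at hdx
    norm_num at hdx
  have hkval : k = 1 := by omega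
  subst hkval
  have hycoeff : ∀ d ∈ T.B, ∃ n : ℕ, T.ip (T.bar b3 * b4 - b3) d = (n : ℂ) := by
    intro d hd
    rw [map_sub, LinearMap.sub_apply]
    by_cases hd3' : d = b3
    · exact ⟨0, by rw [hd3', ipA, T.ip_self b3 hb3]; norm_num⟩
    · obtain ⟨n, hn⟩ := hxcoeff d hd
      exact ⟨n, by rw [hn, T.ip_ne b3 hb3 d hd (fun h => hd3' h.symm)]; ring⟩
  have hyy : T.ip (T.bar b3 * b4 - b3) (T.bar b3 * b4 - b3) = 1 := by
    simp only [map_sub, LinearMap.sub_apply]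
    rw [hxx, ipA, T.ip_symm b3 (T.bar b3 * b4), ipA, T.ip_self b3 hb3]
    norm_num
  obtain ⟨b9, hb9B, hyb9⟩ := TA_norm_one_mem T _ hycoeff hyy
  have hdy : T.deg (T.bar b3 * b4 - b3) = 9 := by
    rw [map_sub, map_mul, degbar3, hd4, hd3]; norm_num
  have hd9 : T.deg b9 = 9 := by rw [← hyb9]; exact hdy
  have hx9 : T.bar b3 * b4 = b3 + b9 := by rw [← hyb9]; ring
  refine ⟨⟨b9, hb9B, hd9, hx9⟩, ?_⟩
  refine ⟨b4 * T.bar b4 - 1 - b8, ?_, ?_, by ring⟩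
  · rw [map_sub, map_sub, map_mul, map_one, hd4, degbar4, hd8]
    norm_num
  · intro d hd
    obtain ⟨n, hn⟩ := hccoeff d hd
    exact ⟨n, by simpa using hn⟩
end

section
/- Let (A,B) be a NITA generated by a non-real element b_3 of degree 3 with b_3·b̄_3 = 1 + b_8 and no nontrivial basis elements of degree 1 or 2. If b_3² = c_3 + b_6 with c_3, b_6 ∈ B and c_3 ∉ {b_3, b̄_3}, then c_3·c̄_3 = 1 + b_8, there exists x_6 ∈ B of degree 6 with b̄_3·c_3 = b_3 + x_6, and moreover b_3·b_8 = x_6 + b̄_3·b_6 and c_3·b_8 = b_6 + b_3·x_6. -/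
namespace TAData

variable {A : Type} [CommRing A] [Algebra ℂ A]

lemma expand (T : TAData A) (a : A) : a = ∑ d ∈ T.B, T.ip a d • d := by
  have h : ∀ a ∈ Submodule.span ℂ (T.B : Set A), a = ∑ d ∈ T.B, T.ip a d • d := by
    intro a ha
    induction ha using Submodule.span_induction with
    | mem x hx =>
      have hx' : x ∈ T.B := hx
      rw [Finset.sum_eq_single x (fun d hd hne => by
          rw [T.ip_ne x hx' d hd (Ne.symm hne), zero_smul])
        (fun h => absurd hx' h)]
      rw [T.ip_self x hx', one_smul]
    | zero => simp
    | add x y hx hy ihx ihy =>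
      conv_lhs => rw [ihx, ihy]
      rw [← Finset.sum_add_distrib]
      refine Finset.sum_congr rfl fun d hd => ?_
      rw [map_add, LinearMap.add_apply, add_smul]
    | smul c x hx ih =>
      conv_lhs => rw [ih]
      rw [Finset.smul_sum]
      refine Finset.sum_congr rfl fun d hd => ?_
      rw [map_smul, LinearMap.smul_apply, smul_smul, smul_eq_mul]
  exact h a (by rw [T.span_top]; trivial)

lemma deg_expand (T : TAData A) (a : A) :
    T.deg a = ∑ d ∈ T.B, T.ip a d * T.deg d := by
  conv_lhs => rw [T.expand a]
  rw [map_sum]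
  refine Finset.sum_congr rfl fun d hd => ?_
  rw [map_smul, smul_eq_mul]

lemma ip_expand (T : TAData A) (a a' : A) :
    T.ip a a' = ∑ d ∈ T.B, T.ip a' d * T.ip a d := by
  conv_lhs => rw [T.expand a']
  rw [map_sum]
  refine Finset.sum_congr rfl fun d hd => ?_
  rw [map_smul, smul_eq_mul]

lemma ip_one' (T : TAData A) (a b : A) : T.ip a b = T.ip (a * T.bar b) 1 := by
  have := T.ip_assoc a b 1
  rwa [mul_one] at this

lemma ip_bar (T : TAData A) (a b : A) : T.ip (T.bar a) (T.bar b) = T.ip a b := by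
  rw [T.ip_one' (T.bar a) (T.bar b), T.bar_bar b, mul_comm, ← T.ip_one' b a,
    T.ip_symm b a]

lemma struct_symm (T : TAData A) (b d e : A) :
    T.ip (b * d) e = T.ip (T.bar b * e) d := by
  rw [T.ip_symm (b * d) e, T.ip_assoc e b d, mul_comm e (T.bar b),
    T.ip_symm (T.bar b * e) d]

lemma deg_bar (T : TAData A) (b : A) : T.deg (T.bar b) = T.deg b := by
  classical
  set S : ℂ := ∑ d ∈ T.B, T.deg d * T.deg d with hS
  have key : T.deg b * S = T.deg (T.bar b) * S := by
    have lhs : ∑ d ∈ T.B, T.deg d * T.deg (b * d) = T.deg b * S := by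
      rw [hS, Finset.mul_sum]
      refine Finset.sum_congr rfl fun d hd => ?_
      rw [map_mul]; ring
    have rhs : ∑ d ∈ T.B, T.deg d * T.deg (b * d)
        = ∑ e ∈ T.B, (∑ d ∈ T.B, T.ip (T.bar b * e) d * T.deg d) * T.deg e := by
      have h1 : ∀ d ∈ T.B, T.deg d * T.deg (b * d)
          = ∑ e ∈ T.B, T.deg d * (T.ip (b * d) e * T.deg e) := by
        intro d hd
        rw [T.deg_expand (b * d), Finset.mul_sum]
      rw [Finset.sum_congr rfl h1, Finset.sum_comm]
      refine Finset.sum_congr rfl fun e he => ?_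
      rw [Finset.sum_mul]
      refine Finset.sum_congr rfl fun d hd => ?_
      rw [T.struct_symm b d e]; ring
    have rhs2 : ∑ e ∈ T.B, (∑ d ∈ T.B, T.ip (T.bar b * e) d * T.deg d) * T.deg e
        = T.deg (T.bar b) * S := by
      rw [hS, Finset.mul_sum]
      refine Finset.sum_congr rfl fun e he => ?_
      rw [← T.deg_expand (T.bar b * e), map_mul]; ring
    rw [← lhs, rhs, rhs2]
  have hSne : S ≠ 0 := by
    have hre : ∀ d ∈ T.B, ∃ r : ℝ, 0 < r ∧ T.deg d * T.deg d = ((r * r : ℝ) : ℂ) := by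
      intro d hd
      obtain ⟨r, hr, hdr⟩ := T.deg_pos d hd
      exact ⟨r, hr, by rw [hdr]; push_cast; ring⟩
    set f : A → ℝ := fun d => if h : d ∈ T.B then (hre d h).choose else 0 with hf
    have hfpos : ∀ d ∈ T.B, 0 < f d := by
      intro d hd; rw [hf]; simp only [dif_pos hd]; exact (hre d hd).choose_spec.1
    have hfval : ∀ d ∈ T.B, T.deg d * T.deg d = ((f d * f d : ℝ) : ℂ) := by
      intro d hd; rw [hf]; simp only [dif_pos hd]; exact (hre d hd).choose_spec.2
    have hSf : S = ((∑ d ∈ T.B, f d * f d : ℝ) : ℂ) := by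
      rw [hS]; push_cast
      exact Finset.sum_congr rfl fun d hd => by rw [hfval d hd]; push_cast; ring
    rw [hSf]
    have hpos : 0 < ∑ d ∈ T.B, f d * f d :=
      Finset.sum_pos (fun d hd => mul_pos (hfpos d hd) (hfpos d hd)) ⟨1, T.one_mem⟩
    exact_mod_cast hpos.ne'
  exact (mul_right_cancel₀ hSne key.symm)

end TAData

lemma nat_sum_eq_one' {α : Type*} [DecidableEq α] {s : Finset α} {f : α → ℕ}
    (h : ∑ d ∈ s, f d = 1) : ∃ a ∈ s, f a = 1 ∧ ∀ b ∈ s, b ≠ a → f b = 0 := by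
  obtain ⟨a, ha, hfa⟩ := Finset.exists_ne_zero_of_sum_ne_zero
    (by rw [h]; exact one_ne_zero)
  have hle : f a ≤ 1 := h ▸ Finset.single_le_sum (fun i _ => Nat.zero_le _) ha
  have hsplit := Finset.add_sum_erase s f ha
  have hz : ∑ d ∈ s.erase a, f d = 0 := by omega
  refine ⟨a, ha, by omega, fun b hb hba => ?_⟩
  exact (Finset.sum_eq_zero_iff.mp hz) b (Finset.mem_erase.mpr ⟨hba, hb⟩)

/-- Lemma 4.1(2): if `b₃² = c₃ + b₆` with `c₃ ∉ {b₃, b̄₃}`,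
then `c₃·c̄₃ = 1 + b₈`, `b̄₃·c₃ = b₃ + x₆` for some `x₆ ∈ B` of degree 6,
`b₃·b₈ = x₆ + b̄₃·b₆` and `c₃·b₈ = b₆ + b₃·x₆`. -/
theorem stmt_4 {A : Type} [CommRing A] [Algebra ℂ A] (T : TAData A)
    (hInt : T.Integral) (hSmall : T.NoSmall)
    (b3 b8 c3 b6 : A)
    (hb3 : b3 ∈ T.B) (hd3 : T.deg b3 = 3) (hnr : T.bar b3 ≠ b3)
    (hgen : T.GeneratedBy b3)
    (hb8 : b8 ∈ T.B) (hd8 : T.deg b8 = 8)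
    (hmul : b3 * T.bar b3 = 1 + b8)
    (hc3 : c3 ∈ T.B) (hdc3 : T.deg c3 = 3) (hc3b3 : c3 ≠ b3) (hc3b3' : c3 ≠ T.bar b3)
    (hb6 : b6 ∈ T.B) (hd6 : T.deg b6 = 6)
    (hsq : b3 * b3 = c3 + b6) :
    c3 * T.bar c3 = 1 + b8 ∧
    ∃ x6 ∈ T.B, T.deg x6 = 6 ∧ T.bar b3 * c3 = b3 + x6 ∧
      b3 * b8 = x6 + T.bar b3 * b6 ∧
      c3 * b8 = b6 + b3 * x6 := by
  classical
  obtain ⟨hint1, hint2⟩ := hInt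
  have hbb3 : T.bar b3 ∈ T.B := T.bar_mem b3 hb3
  have hbc3 : T.bar c3 ∈ T.B := T.bar_mem c3 hc3
  have hbarbar3 : T.bar (T.bar b3) = b3 := T.bar_bar b3
  have hdbb3 : T.deg (T.bar b3) = 3 := by rw [T.deg_bar, hd3]
  have hdbc3 : T.deg (T.bar c3) = 3 := by rw [T.deg_bar, hdc3]
  -- b8 is real
  have hb8bar : T.bar b8 = b8 := by
    have h1 : T.bar (b3 * T.bar b3) = T.bar (1 + b8) := congrArg T.bar hmul
    rw [map_mul, T.bar_bar, mul_comm (T.bar b3) b3, hmul, map_add, map_one] at h1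
    exact (add_left_cancel h1).symm
  -- distinctness facts
  have hb6c3 : b6 ≠ c3 := by
    intro h; rw [h, hdc3] at hd6; norm_num at hd6
  have hb8one : b8 ≠ 1 := by
    intro h; rw [h, map_one] at hd8; exact absurd hd8 (by norm_num)
  -- integer degrees
  obtain ⟨D, hDpos, hDval⟩ : ∃ D : A → ℕ, (∀ d ∈ T.B, 0 < D d) ∧
      (∀ d ∈ T.B, T.deg d = (D d : ℂ)) := by
    refine ⟨fun d => if h : d ∈ T.B then (hint2 d h).choose else 0, ?_, ?_⟩
    · intro d hd; simp only [dif_pos hd]; exact (hint2 d hd).choose_spec.1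
    · intro d hd; simp only [dif_pos hd]; exact (hint2 d hd).choose_spec.2
  have hD1 : D 1 = 1 := by
    have h := (hDval 1 T.one_mem).symm.trans (map_one T.deg)
    exact_mod_cast h
  have hDb3 : D b3 = 3 := by
    have h := (hDval b3 hb3).symm.trans hd3; exact_mod_cast h
  have hDb8 : D b8 = 8 := by
    have h := (hDval b8 hb8).symm.trans hd8; exact_mod_cast h
  -- integer coefficients of P := bar b3 * c3 and Q := c3 * bar c3
  obtain ⟨N, hNval⟩ : ∃ N : A → ℕ,
      ∀ d ∈ T.B, T.ip (T.bar b3 * c3) d = (N d : ℂ) := by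
    refine ⟨fun d => if h : d ∈ T.B then (hint1 _ hbb3 _ hc3 _ h).choose else 0, ?_⟩
    intro d hd; simp only [dif_pos hd]; exact (hint1 _ hbb3 _ hc3 _ hd).choose_spec
  obtain ⟨Qf, hQval⟩ : ∃ Qf : A → ℕ,
      ∀ d ∈ T.B, T.ip (c3 * T.bar c3) d = (Qf d : ℂ) := by
    refine ⟨fun d => if h : d ∈ T.B then (hint1 _ hc3 _ hbc3 _ h).choose else 0, ?_⟩
    intro d hd; simp only [dif_pos hd]; exact (hint1 _ hc3 _ hbc3 _ hd).choose_spec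
  obtain ⟨j, hj⟩ := hint1 b8 hb8 c3 hc3 c3 hc3
  -- coefficient of b3 in P is 1
  have hPb3 : T.ip (T.bar b3 * c3) b3 = 1 := by
    rw [T.ip_symm, T.ip_assoc, hbarbar3, hsq, map_add, LinearMap.add_apply,
      T.ip_self c3 hc3, T.ip_ne b6 hb6 c3 hc3 hb6c3, add_zero]
  have hNb3 : N b3 = 1 := by
    have h := (hNval b3 hb3).symm.trans hPb3; exact_mod_cast h
  -- coefficient of 1 in Q is 1
  have hQ1 : Qf 1 = 1 := by
    have h1 : T.ip (c3 * T.bar c3) 1 = 1 := by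
      rw [T.ip_symm, T.ip_assoc, one_mul, T.ip_self _ hbc3]
    have h := (hQval 1 T.one_mem).symm.trans h1; exact_mod_cast h
  -- coefficient of b8 in Q is j
  have hQb8 : Qf b8 = j := by
    have h1 : T.ip (c3 * T.bar c3) b8 = T.ip (b8 * c3) c3 := by
      have hb : T.bar (b8 * c3) = b8 * T.bar c3 := by rw [map_mul, hb8bar]
      rw [T.ip_symm, T.ip_assoc, ← hb]
      exact T.ip_bar (b8 * c3) c3
    have h := (hQval b8 hb8).symm.trans (h1.trans hj); exact_mod_cast h
  -- norm of P
  have hPP : T.ip (T.bar b3 * c3) (T.bar b3 * c3) = 1 + (j : ℂ) := by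
    rw [T.ip_assoc, hbarbar3]
    have hPb : T.bar b3 * c3 * b3 = c3 + b8 * c3 := by linear_combination c3 * hmul
    rw [hPb, map_add, LinearMap.add_apply, T.ip_self c3 hc3, hj]
  -- natural-number sum identities
  have hSN2 : ∑ d ∈ T.B, N d * N d = 1 + j := by
    have hc : ((∑ d ∈ T.B, N d * N d : ℕ) : ℂ) = ((1 + j : ℕ) : ℂ) := by
      push_cast
      rw [← hPP, T.ip_expand (T.bar b3 * c3) (T.bar b3 * c3)]
      exact Finset.sum_congr rfl fun d hd => by rw [hNval d hd]
    exact_mod_cast hc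
  have hSND : ∑ d ∈ T.B, N d * D d = 9 := by
    have hdegP : T.deg (T.bar b3 * c3) = (9 : ℂ) := by
      rw [map_mul, hdbb3, hdc3]; norm_num
    have hc : ((∑ d ∈ T.B, N d * D d : ℕ) : ℂ) = ((9 : ℕ) : ℂ) := by
      push_cast
      rw [← hdegP, T.deg_expand (T.bar b3 * c3)]
      exact Finset.sum_congr rfl fun d hd => by rw [hNval d hd, hDval d hd]
    exact_mod_cast hc
  have hSQD : ∑ d ∈ T.B, Qf d * D d = 9 := by
    have hdegQ : T.deg (c3 * T.bar c3) = (9 : ℂ) := by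
      rw [map_mul, hdc3, hdbc3]; norm_num
    have hc : ((∑ d ∈ T.B, Qf d * D d : ℕ) : ℂ) = ((9 : ℕ) : ℂ) := by
      push_cast
      rw [← hdegQ, T.deg_expand (c3 * T.bar c3)]
      exact Finset.sum_congr rfl fun d hd => by rw [hQval d hd, hDval d hd]
    exact_mod_cast hc
  -- split off b3 from the P-sums
  have hsplitN2 : N b3 * N b3 + ∑ d ∈ T.B.erase b3, N d * N d = ∑ d ∈ T.B, N d * N d :=
    Finset.add_sum_erase T.B (fun d => N d * N d) hb3
  have hsplitND : N b3 * D b3 + ∑ d ∈ T.B.erase b3, N d * D d = ∑ d ∈ T.B, N d * D d :=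
    Finset.add_sum_erase T.B (fun d => N d * D d) hb3
  rw [hNb3] at hsplitN2
  rw [hNb3, hDb3] at hsplitND
  have hEN2 : ∑ d ∈ T.B.erase b3, N d * N d = j := by omega
  have hEND : ∑ d ∈ T.B.erase b3, N d * D d = 6 := by omega
  -- split off 1 and b8 from the Q-sum
  have hb8e : b8 ∈ T.B.erase 1 := Finset.mem_erase.mpr ⟨hb8one, hb8⟩
  have hsq1 : Qf 1 * D 1 + ∑ d ∈ T.B.erase 1, Qf d * D d = ∑ d ∈ T.B, Qf d * D d :=
    Finset.add_sum_erase T.B (fun d => Qf d * D d) T.one_mem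
  have hsq2 : Qf b8 * D b8 + ∑ d ∈ (T.B.erase 1).erase b8, Qf d * D d
      = ∑ d ∈ T.B.erase 1, Qf d * D d :=
    Finset.add_sum_erase _ (fun d => Qf d * D d) hb8e
  rw [hQ1, hD1] at hsq1
  rw [hQb8, hDb8] at hsq2
  -- j ≥ 1
  have hj1 : 1 ≤ j := by
    by_contra h
    have hj0 : j = 0 := by omega
    have hzz : ∀ d ∈ T.B.erase b3, N d * N d = 0 :=
      Finset.sum_eq_zero_iff.mp (by rw [hEN2, hj0])
    have hz : ∑ d ∈ T.B.erase b3, N d * D d = 0 :=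
      Finset.sum_eq_zero fun d hd => by
        have h0 : N d = 0 := mul_self_eq_zero.mp (hzz d hd)
        rw [h0, zero_mul]
    omega
  have hjeq : j = 1 := by omega
  have hR0 : ∑ d ∈ (T.B.erase 1).erase b8, Qf d * D d = 0 := by omega
  have hQrest : ∀ d ∈ (T.B.erase 1).erase b8, Qf d = 0 := by
    intro d hd
    have h0 := Finset.sum_eq_zero_iff.mp hR0 d hd
    have hdB : d ∈ T.B := Finset.mem_of_mem_erase (Finset.mem_of_mem_erase hd)
    rcases Nat.mul_eq_zero.mp h0 with h | h
    · exact h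
    · exact absurd h (hDpos d hdB).ne'
  -- Q = 1 + b8
  have hQfull : c3 * T.bar c3 = 1 + b8 := by
    have hsum : ∑ d ∈ T.B, T.ip (c3 * T.bar c3) d • d = 1 + b8 := by
      have split1 : ∑ d ∈ T.B, T.ip (c3 * T.bar c3) d • d
          = T.ip (c3 * T.bar c3) 1 • (1 : A)
            + ∑ d ∈ T.B.erase 1, T.ip (c3 * T.bar c3) d • d :=
        (Finset.add_sum_erase T.B (fun d => T.ip (c3 * T.bar c3) d • d) T.one_mem).symm
      have split2 : ∑ d ∈ T.B.erase 1, T.ip (c3 * T.bar c3) d • d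
          = T.ip (c3 * T.bar c3) b8 • b8
            + ∑ d ∈ (T.B.erase 1).erase b8, T.ip (c3 * T.bar c3) d • d :=
        (Finset.add_sum_erase _ (fun d => T.ip (c3 * T.bar c3) d • d) hb8e).symm
      have hzero : ∑ d ∈ (T.B.erase 1).erase b8, T.ip (c3 * T.bar c3) d • d = 0 :=
        Finset.sum_eq_zero fun d hd => by
          have hdB : d ∈ T.B := Finset.mem_of_mem_erase (Finset.mem_of_mem_erase hd)
          rw [hQval d hdB, hQrest d hd]; simp
      rw [split1, split2, hzero, add_zero,
        hQval 1 T.one_mem, hQval b8 hb8, hQ1, hQb8, hjeq]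
      simp
    exact (T.expand (c3 * T.bar c3)).trans hsum
  -- extract x6
  obtain ⟨x6, hx6e, hx6sq, hxrest⟩ :=
    nat_sum_eq_one' (f := fun d => N d * N d) (hjeq ▸ hEN2)
  have hx6B : x6 ∈ T.B := Finset.mem_of_mem_erase hx6e
  have hNx6 : N x6 = 1 := by
    rcases Nat.eq_one_of_mul_eq_one_right hx6sq with h; exact h
  have hN0 : ∀ d ∈ T.B.erase b3, d ≠ x6 → N d = 0 := fun d hd hne =>
    mul_self_eq_zero.mp (hxrest d hd hne)
  -- degree of x6
  have hsx6 : N x6 * D x6 + ∑ d ∈ (T.B.erase b3).erase x6, N d * D d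
      = ∑ d ∈ T.B.erase b3, N d * D d :=
    Finset.add_sum_erase _ (fun d => N d * D d) hx6e
  have hrest0 : ∑ d ∈ (T.B.erase b3).erase x6, N d * D d = 0 :=
    Finset.sum_eq_zero fun d hd => by
      rw [hN0 d (Finset.mem_of_mem_erase hd) (Finset.mem_erase.mp hd).1, zero_mul]
  have hDx6 : D x6 = 6 := by
    rw [hNx6, one_mul, hrest0, add_zero, hEND] at hsx6; exact hsx6
  have hdegx6 : T.deg x6 = 6 := by rw [hDval x6 hx6B, hDx6]; norm_num
  -- P = b3 + x6
  have hPfull : T.bar b3 * c3 = b3 + x6 := by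
    have hsum : ∑ d ∈ T.B, T.ip (T.bar b3 * c3) d • d = b3 + x6 := by
      have split1 : ∑ d ∈ T.B, T.ip (T.bar b3 * c3) d • d
          = T.ip (T.bar b3 * c3) b3 • b3
            + ∑ d ∈ T.B.erase b3, T.ip (T.bar b3 * c3) d • d :=
        (Finset.add_sum_erase T.B (fun d => T.ip (T.bar b3 * c3) d • d) hb3).symm
      have split2 : ∑ d ∈ T.B.erase b3, T.ip (T.bar b3 * c3) d • d = x6 := by
        rw [Finset.sum_eq_single x6 (fun d hd hne => by
            have hdB : d ∈ T.B := Finset.mem_of_mem_erase hd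
            rw [hNval d hdB, hN0 d hd hne]; simp)
          (fun h => absurd hx6e h)]
        rw [hNval x6 hx6B, hNx6]; simp
      rw [split1, split2, hPb3, one_smul]
    exact (T.expand (T.bar b3 * c3)).trans hsum
  refine ⟨hQfull, x6, hx6B, hdegx6, hPfull, ?_, ?_⟩
  · linear_combination T.bar b3 * hsq + hPfull - b3 * hmul
  · linear_combination b3 * hPfull + hsq - c3 * hmul
end

section
/- There is no NITA (A,B) generated by a non-real element b_3 of degree 3 with no nontrivial basis elements of degree 1 or 2 such that b_3·b̄_3 = 1 + b_8, b_3² equals either b̄_3 + b_6 or c_3 + b_6 (with b_6 ∈ B of degree 6, c_3 ∈ B of degree 3, c_3 ∉ {b_3, b̄_3}), and (b_3·b_8, b_3·b_8) = 2. -/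
namespace TAData

variable {A : Type} [CommRing A] [Algebra ℂ A]

/-- Every element expands in the basis `B` with coefficients given by `ip`. -/
lemma expansion (T : TAData A) (z : A) : ∑ d ∈ T.B, T.ip z d • d = z := by
  have hz : z ∈ Submodule.span ℂ (T.B : Set A) := by rw [T.span_top]; trivial
  induction hz using Submodule.span_induction with
  | mem b hb =>
      rw [Finset.sum_eq_single_of_mem b hb]
      · rw [T.ip_self b hb, one_smul]
      · intro d hd hdb
        rw [T.ip_ne b hb d hd (Ne.symm hdb), zero_smul]
  | zero => simp
  | add x y hx hy ihx ihy =>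
      simp only [map_add, LinearMap.add_apply, add_smul, Finset.sum_add_distrib, ihx, ihy]
  | smul c x hx ih =>
      calc ∑ d ∈ T.B, T.ip (c • x) d • d = c • ∑ d ∈ T.B, T.ip x d • d := by
            rw [Finset.smul_sum]
            refine Finset.sum_congr rfl fun d hd => ?_
            rw [map_smul, LinearMap.smul_apply, smul_assoc]
        _ = c • x := by rw [ih]

/-- Parseval-type formula for the orthonormal basis. -/
lemma ip_eq_sum (T : TAData A) (z w : A) :
    T.ip z w = ∑ d ∈ T.B, T.ip w d * T.ip z d := by
  conv_lhs => rw [← T.expansion w]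
  rw [map_sum]
  refine Finset.sum_congr rfl fun d hd => ?_
  rw [map_smul, smul_eq_mul]

/-- Coefficients of a product of basis elements, as natural numbers. -/
lemma coeff_nat (T : TAData A) (hInt : T.Integral) {b c : A} (hb : b ∈ T.B) (hc : c ∈ T.B) :
    ∃ N : A → ℕ, ∀ d ∈ T.B, T.ip (b * c) d = (N d : ℂ) := by
  classical
  refine ⟨fun d => if hd : d ∈ T.B then (hInt.1 b hb c hc d hd).choose else 0, fun d hd => ?_⟩
  simp only [dif_pos hd]
  exact (hInt.1 b hb c hc d hd).choose_spec

/-- If all coefficients of `w` vanish except a coefficient `1` at `b`, then `w = b`. -/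
lemma eq_basis_of (T : TAData A) {w b : A} (hb : b ∈ T.B) (h1 : T.ip w b = 1)
    (h0 : ∀ d ∈ T.B, d ≠ b → T.ip w d = 0) : w = b := by
  have h := T.expansion w
  rw [Finset.sum_eq_single_of_mem b hb (fun d hd hne => by rw [h0 d hd hne, zero_smul])] at h
  rw [h1, one_smul] at h
  exact h.symm

end TAData

/-- Theorem 4.1: there is no NITA generated by a non-real `b₃` of
degree 3, without nontrivial basis elements of degree 1 or 2, with
`b₃·b̄₃ = 1 + b₈`, `b₃²` equal to `b̄₃ + b₆` or to `c₃ + b₆`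
(`c₃ ∉ {b₃, b̄₃}`), and `(b₃b₈, b₃b₈) = 2`. -/
theorem stmt_5 {A : Type} [CommRing A] [Algebra ℂ A] (T : TAData A)
    (hInt : T.Integral) (hSmall : T.NoSmall)
    (b3 b8 b6 : A)
    (hb3 : b3 ∈ T.B) (hd3 : T.deg b3 = 3) (hnr : T.bar b3 ≠ b3)
    (hgen : T.GeneratedBy b3)
    (hb8 : b8 ∈ T.B) (hd8 : T.deg b8 = 8)
    (hmul : b3 * T.bar b3 = 1 + b8)
    (hb6 : b6 ∈ T.B) (hd6 : T.deg b6 = 6)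
    (hsq : b3 * b3 = T.bar b3 + b6 ∨
      ∃ c3 ∈ T.B, T.deg c3 = 3 ∧ c3 ≠ b3 ∧ c3 ≠ T.bar b3 ∧ b3 * b3 = c3 + b6)
    (hip : T.ip (b3 * b8) (b3 * b8) = 2) : False := by
  classical
  have hone8 : (1 : A) ≠ b8 := by
    intro h
    have h' := congrArg T.deg h
    rw [map_one, hd8] at h'
    norm_num at h'
  -- the degree of `bar b3` is 3
  have hdb3' : T.deg (T.bar b3) = 3 := by
    have h1 := congrArg T.deg hmul
    rw [map_mul, map_add, map_one, hd3, hd8] at h1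
    have h2 : (3 : ℂ) * T.deg (T.bar b3) = 3 * 3 := by rw [h1]; norm_num
    exact mul_left_cancel₀ (by norm_num) h2
  -- unify the two cases: b3 * b3 = e + b6 with e ∈ B of degree 3
  obtain ⟨e, he, hde, hkey⟩ : ∃ e ∈ T.B, T.deg e = 3 ∧ b3 * b3 = e + b6 := by
    rcases hsq with h | ⟨c3, hc3, hdc3, _, _, h⟩
    · exact ⟨T.bar b3, T.bar_mem b3 hb3, hdb3', h⟩
    · exact ⟨c3, hc3, hdc3, h⟩
  have heb6 : e ≠ b6 := by
    intro h
    have h' := congrArg T.deg h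
    rw [hde, hd6] at h'
    norm_num at h'
  -- coefficient of b3 in b3*b8 is 1
  have hip1 : T.ip (b3 * b8) b3 = 1 := by
    rw [T.ip_symm, T.ip_assoc, hmul, map_add, LinearMap.add_apply,
      T.ip_ne 1 T.one_mem b8 hb8 hone8, T.ip_self b8 hb8, zero_add]
  -- natural-number coefficients of b3*b8
  obtain ⟨Nz, hNz⟩ := T.coeff_nat hInt hb3 hb8
  have hNzb3 : Nz b3 = 1 := by
    have h := hNz b3 hb3
    rw [hip1] at h
    exact_mod_cast h.symm
  -- sum of squares of coefficients is 2
  have hsum2 : ∑ d ∈ T.B, Nz d ^ 2 = 2 := by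
    have h2 : ((∑ d ∈ T.B, Nz d ^ 2 : ℕ) : ℂ) = 2 := by
      push_cast
      rw [← hip, T.ip_eq_sum]
      refine Finset.sum_congr rfl fun d hd => ?_
      rw [hNz d hd]; ring
    exact_mod_cast h2
  -- find the second basis element x in the support of b3*b8
  have hkey2 : Nz b3 ^ 2 + ∑ d ∈ T.B.erase b3, Nz d ^ 2 = 2 := by
    rw [Finset.add_sum_erase T.B (fun d => Nz d ^ 2) hb3]; exact hsum2
  rw [hNzb3] at hkey2
  have hS : ∑ d ∈ T.B.erase b3, Nz d ^ 2 = 1 := by omega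
  obtain ⟨x, hxe, hxne0⟩ := Finset.exists_ne_zero_of_sum_ne_zero
    (by rw [hS]; norm_num : ∑ d ∈ T.B.erase b3, Nz d ^ 2 ≠ 0)
  have hxB : x ∈ T.B := Finset.mem_of_mem_erase hxe
  have hxb3 : x ≠ b3 := Finset.ne_of_mem_erase hxe
  have hrest : Nz x ^ 2 + ∑ d ∈ (T.B.erase b3).erase x, Nz d ^ 2 = 1 := by
    rw [Finset.add_sum_erase (T.B.erase b3) (fun d => Nz d ^ 2) hxe]; exact hS
  have hx1 : Nz x = 1 := by
    have h1 : Nz x ≠ 0 := fun h => hxne0 (by simp [h])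
    have h2 : Nz x ≤ Nz x ^ 2 := Nat.le_self_pow (by norm_num) _
    have h3 : Nz x ^ 2 ≤ 1 := le_trans (Nat.le_add_right _ _) (le_of_eq hrest)
    have h4 := le_trans h2 h3
    omega
  have hrest0 : ∑ d ∈ (T.B.erase b3).erase x, Nz d ^ 2 = 0 := by
    rw [hx1] at hrest; omega
  have hzero : ∀ d ∈ T.B, d ≠ b3 → d ≠ x → Nz d = 0 := by
    intro d hd h1 h2
    have hd' : d ∈ (T.B.erase b3).erase x :=
      Finset.mem_erase.2 ⟨h2, Finset.mem_erase.2 ⟨h1, hd⟩⟩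
    have h := (Finset.sum_eq_zero_iff.1 hrest0) d hd'
    exact pow_eq_zero_iff (by norm_num) |>.1 h
  -- b3 * b8 = b3 + x
  have hz : b3 * b8 = b3 + x := by
    have hexp := T.expansion (b3 * b8)
    rw [← Finset.add_sum_erase T.B (fun d => T.ip (b3 * b8) d • d) hb3,
      ← Finset.add_sum_erase (T.B.erase b3) (fun d => T.ip (b3 * b8) d • d) hxe] at hexp
    have hr0 : ∑ d ∈ (T.B.erase b3).erase x, T.ip (b3 * b8) d • d = 0 :=
      Finset.sum_eq_zero fun d hd => by
        have hdB : d ∈ T.B := Finset.mem_of_mem_erase (Finset.mem_of_mem_erase hd)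
        rw [hNz d hdB, hzero d hdB (Finset.ne_of_mem_erase (Finset.mem_of_mem_erase hd))
          (Finset.ne_of_mem_erase hd)]
        simp
    rw [hr0, add_zero, hip1, hNz x hxB, hx1] at hexp
    simpa using hexp.symm
  -- the two products u = bar b3 * e and v = bar b3 * b6
  have hb3B' : T.bar b3 ∈ T.B := T.bar_mem b3 hb3
  obtain ⟨Nu, hNu⟩ := T.coeff_nat hInt hb3B' he
  obtain ⟨Nv, hNv⟩ := T.coeff_nat hInt hb3B' hb6
  have huv : T.bar b3 * e + T.bar b3 * b6 = b3 + (b3 + x) := by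
    linear_combination (-(T.bar b3)) * hkey + b3 * hmul + hz
  have hub3 : T.ip (T.bar b3 * e) b3 = 1 := by
    rw [T.ip_symm, T.ip_assoc, T.bar_bar, hkey, map_add, LinearMap.add_apply,
      T.ip_self e he, T.ip_ne b6 hb6 e he (Ne.symm heb6), add_zero]
  have hvb3 : T.ip (T.bar b3 * b6) b3 = 1 := by
    rw [T.ip_symm, T.ip_assoc, T.bar_bar, hkey, map_add, LinearMap.add_apply,
      T.ip_self b6 hb6, T.ip_ne e he b6 hb6 heb6, zero_add]
  -- the coefficients of u and v at x sum to 1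
  have hsum_x : Nu x + Nv x = 1 := by
    have h1 : T.ip (T.bar b3 * e) x + T.ip (T.bar b3 * b6) x = 1 := by
      rw [← LinearMap.add_apply, ← map_add, huv]
      simp only [map_add, LinearMap.add_apply]
      rw [T.ip_ne b3 hb3 x hxB (Ne.symm hxb3), T.ip_self x hxB]
      ring
    rw [hNu x hxB, hNv x hxB] at h1
    exact_mod_cast h1
  -- coefficients of u and v away from b3 and x vanish
  have hcoeff0 : ∀ d ∈ T.B, d ≠ b3 → d ≠ x → Nu d = 0 ∧ Nv d = 0 := by
    intro d hd h1 h2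
    have h3 : T.ip (T.bar b3 * e) d + T.ip (T.bar b3 * b6) d = 0 := by
      rw [← LinearMap.add_apply, ← map_add, huv]
      simp only [map_add, LinearMap.add_apply]
      rw [T.ip_ne b3 hb3 d hd (Ne.symm h1), T.ip_ne x hxB d hd (Ne.symm h2)]
      ring
    rw [hNu d hd, hNv d hd] at h3
    have h4 : Nu d + Nv d = 0 := by exact_mod_cast h3
    omega
  -- one of u, v equals b3, contradicting degrees
  have hcase : Nu x = 0 ∨ Nv x = 0 := by omega
  rcases hcase with h | h
  · -- u = b3, but deg u = 9
    have hu0 : ∀ d ∈ T.B, d ≠ b3 → T.ip (T.bar b3 * e) d = 0 := by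
      intro d hd hne
      by_cases hdx : d = x
      · subst hdx
        rw [hNu d hd, h]; norm_num
      · rw [hNu d hd, (hcoeff0 d hd hne hdx).1]; norm_num
    have hueq : T.bar b3 * e = b3 := T.eq_basis_of hb3 hub3 hu0
    have hdu := congrArg T.deg hueq
    rw [map_mul, hdb3', hde, hd3] at hdu
    norm_num at hdu
  · -- v = b3, but deg v = 18
    have hv0 : ∀ d ∈ T.B, d ≠ b3 → T.ip (T.bar b3 * b6) d = 0 := by
      intro d hd hne
      by_cases hdx : d = x
      · subst hdx
        rw [hNv d hd, h]; norm_num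
      · rw [hNv d hd, (hcoeff0 d hd hne hdx).2]; norm_num
    have hveq : T.bar b3 * b6 = b3 := T.eq_basis_of hb3 hvb3 hv0
    have hdv := congrArg T.deg hveq
    rw [map_mul, hdb3', hd6, hd3] at hdv
    norm_num at hdv
end
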